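/- arXiv:2002.03926 — 2 statements merged into one kernel-verified Lean document; each statement's English description precedes it below -/
import Mathlib

section
/- Let (D,g) be a metrised ℝ-divisor on a regular projective curve X over a trivially valued field, with Γ(D)_ℚ^× ≠ ∅. Then λ_ess(D,g) = sup_{φ ∈ Γ(D)_ℚ^×} (−ln‖φ‖_g) = sup_{n≥1} (1/n) sup_{s ∈ H^0(nD)∖{0}} (−ln‖s‖_{ng}), i.e. the essential infimum computed over ℝ-sections equals the one computed over ℚ-sections. -/
open scoped BigOperators Classical

/-- An abstract package of the data attached to a regular projective curve `X` over a field
`k`: `F = Rat(X)` is the function field, `P = X^{(1)}` is the set of closed points,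
`degp x = [k(x):k]`, `ord x f` is the order of vanishing of a nonzero rational function `f`
at `x`, `H0 D` is the Riemann–Roch space of an ℝ-divisor `D : P → ℝ` (a `k`-subspace of
`F`), and `riemannRoch` is the Riemann–Roch estimate for integral divisors of large
degree. -/
structure CurveData (k F P : Type*) [Field k] [Field F] [Algebra k F] : Type _ where
  genus : ℕ
  degp : P → ℕ
  degp_pos : ∀ x, 0 < degp x
  ord : P → F → ℤ
  ord_mul : ∀ (x : P) {f g : F}, f ≠ 0 → g ≠ 0 → ord x (f * g) = ord x f + ord x g
  ord_support_finite : ∀ {f : F}, f ≠ 0 → (Function.support fun x => ord x f).Finite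
  ord_deg_zero : ∀ {f : F}, f ≠ 0 → (∑ᶠ x, (ord x f : ℝ) * (degp x : ℝ)) = 0
  finitely_generated : ∃ S : Finset F, IntermediateField.adjoin k (S : Set F) = ⊤
  H0 : (P → ℝ) → Submodule k F
  mem_H0 : ∀ (D : P → ℝ) (f : F), f ∈ H0 D ↔ (f ≠ 0 → ∀ x, 0 ≤ (ord x f : ℝ) + D x)
  H0_finite : ∀ D, Module.Finite k (H0 D)
  riemannRoch : ∀ D : P → ℝ, (Function.support D).Finite →
    (∀ x, ∃ n : ℤ, (n : ℝ) = D x) →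
    2 * (genus : ℝ) - 2 < ∑ᶠ x, D x * (degp x : ℝ) →
    (Module.finrank k ↥(H0 D) : ℝ) = (∑ᶠ x, D x * (degp x : ℝ)) + 1 - genus

variable {k F P : Type*} [Field k] [Field F] [Algebra k F]

/-- The degree of an ℝ-divisor `D`: `deg D = Σ_x D(x)·[k(x):k]`. -/
noncomputable def CurveData.degD (C : CurveData k F P) (D : P → ℝ) : ℝ :=
  ∑ᶠ x, D x * (C.degp x : ℝ)

/-- `E` is a principal ℝ-divisor, i.e. lies in the ℝ-linear span of the divisors of nonzero
rational functions (the image of `Rat(X)^×_ℝ → nDiv_ℝ(X)`). -/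
def CurveData.IsPrincipalR (C : CurveData k F P) (E : P → ℝ) : Prop :=
  E ∈ Submodule.span ℝ {E' : P → ℝ | ∃ f : F, f ≠ 0 ∧ E' = fun x => (C.ord x f : ℝ)}

open scoped BigOperators Classical

/-- A Green function on the tree `𝒯(X^{(1)})` of length 1 (the Berkovich analytification
of a curve over a trivially valued field), described through its restrictions to the
branches: `val x t` is the value at the point of `[η₀, x₀]` with parameter `t ∈ [0,∞)`,
`slope x = μ_x(g)` is the asymptotic slope along the branch of `x` (so the value at the
leaf `x₀` is `±∞` when `slope x ≠ 0`), and `root = g(η₀)`. Continuity on the tree amounts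
to continuity along each branch, existence of the limit of `φ_g = g − slope·t` at each
leaf, finiteness of the support of the slopes, and the condition that for every `ε > 0`
the bounded part `φ_g` stays `ε`-close to `g(η₀)` on all but finitely many branches. -/
structure GreenFunction (P : Type*) : Type _ where
  val : P → ℝ → ℝ
  slope : P → ℝ
  root : ℝ
  val_zero : ∀ x, val x 0 = root
  contOn : ∀ x, ContinuousOn (val x) (Set.Ici 0)
  slope_support_finite : (Function.support slope).Finite
  phi_tendsto : ∀ x, ∃ L : ℝ,
    Filter.Tendsto (fun t => val x t - slope x * t) Filter.atTop (nhds L)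
  rootCont : ∀ ε > (0:ℝ), {x : P | ∃ t ≥ (0:ℝ), ε ≤ |val x t - slope x * t - root|}.Finite

namespace GreenFunction

variable {P : Type*}

/-- Sum of two Green functions (corresponding to the sum of metrised ℝ-divisors). -/
noncomputable def add (g h : GreenFunction P) : GreenFunction P where
  val x t := g.val x t + h.val x t
  slope x := g.slope x + h.slope x
  root := g.root + h.root
  val_zero x := by simp [g.val_zero, h.val_zero]
  contOn x := (g.contOn x).add (h.contOn x)
  slope_support_finite :=
    (g.slope_support_finite.union h.slope_support_finite).subset
      (Function.support_add _ _)
  phi_tendsto x := by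
    obtain ⟨L1, h1⟩ := g.phi_tendsto x
    obtain ⟨L2, h2⟩ := h.phi_tendsto x
    refine ⟨L1 + L2, ?_⟩
    have h3 := h1.add h2
    convert h3 using 2 with t
    ring
  rootCont := by
    intro ε hε
    have h1 := g.rootCont (ε / 2) (by linarith)
    have h2 := h.rootCont (ε / 2) (by linarith)
    refine (h1.union h2).subset ?_
    intro x hx
    obtain ⟨t, ht, habs⟩ := hx
    by_contra hc
    simp only [Set.mem_union, Set.mem_setOf_eq, not_or, not_exists] at hc
    push_neg at hc
    obtain ⟨hc1, hc2⟩ := hc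
    have e1 := hc1 t ht
    have e2 := hc2 t ht
    have tri : |(g.val x t + h.val x t) - (g.slope x + h.slope x) * t - (g.root + h.root)|
        ≤ |g.val x t - g.slope x * t - g.root| + |h.val x t - h.slope x * t - h.root| := by
      have h4 := abs_add_le (g.val x t - g.slope x * t - g.root)
        (h.val x t - h.slope x * t - h.root)
      have h5 : (g.val x t + h.val x t) - (g.slope x + h.slope x) * t - (g.root + h.root)
          = (g.val x t - g.slope x * t - g.root) + (h.val x t - h.slope x * t - h.root) := by
        ring
      rw [h5]
      exact h4
    linarith

/-- Adding a real constant `c` to a Green function (i.e. `g + c`). -/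
noncomputable def addConst (g : GreenFunction P) (c : ℝ) : GreenFunction P where
  val x t := g.val x t + c
  slope := g.slope
  root := g.root + c
  val_zero x := by simp [g.val_zero]
  contOn x := (g.contOn x).add continuousOn_const
  slope_support_finite := g.slope_support_finite
  phi_tendsto x := by
    obtain ⟨L, hL⟩ := g.phi_tendsto x
    refine ⟨L + c, ?_⟩
    have h3 := hL.add (tendsto_const_nhds (x := c))
    convert h3 using 2 with t
    ring
  rootCont := by
    intro ε hε
    refine (g.rootCont ε hε).subset ?_
    rintro x ⟨t, ht, habs⟩
    refine ⟨t, ht, ?_⟩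
    have : (fun (x : P) (t : ℝ) => g.val x t + c) x t - g.slope x * t - (g.root + c)
        = g.val x t - g.slope x * t - g.root := by ring
    rwa [this] at habs

end GreenFunction

variable {k F P : Type*} [Field k] [Field F] [Algebra k F]

/-- The essential infimum `λ_ess(D,g)`: the supremum over `φ ∈ Γ(D)_ℝ^×` (represented by
the corresponding principal ℝ-divisors `E = (φ)` with `E + D ≥ 0`) of the infimum over the
Berkovich tree `X^an` of `g_{(φ)} + g` (on the branch of `x` at parameter `t`, this
function has value `E x · t + g(ξ_x(t))`). Here `D = g.slope`. -/
noncomputable def CurveData.lambdaEss (C : CurveData k F P) (g : GreenFunction P) : EReal :=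
  ⨆ E ∈ {E : P → ℝ | C.IsPrincipalR E ∧ ∀ x, 0 ≤ E x + g.slope x},
    ⨅ (x : P) (t : ℝ) (_ : 0 ≤ t), ((E x * t + g.val x t : ℝ) : EReal)

/-- `μ_{inf,x}(g) = inf_{ξ ∈ (η₀,x₀)} g(ξ)/t(ξ) ∈ ℝ ∪ {−∞}`, as an extended real. -/
noncomputable def GreenFunction.muInfX (g : GreenFunction P) (x : P) : EReal :=
  ⨅ (t : ℝ) (_ : 0 < t), ((g.val x t / t : ℝ) : EReal)

/-- Conversion `EReal → ℝ≥0∞` (positive part, sending `⊤` to `⊤`). -/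
noncomputable def erealToENNReal (e : EReal) : ENNReal :=
  if e = ⊤ then ⊤ else ENNReal.ofReal e.toReal

/-- The Arakelov degree of an ultrametrically normed finite-dimensional vector space over
a trivially valued field: minus the logarithm of the determinant norm of a basis wedge.
(Over a trivially valued field, for an ultrametric norm `N`, the determinant norm of a
generator of the determinant line is the infimum over bases of the product of the norms,
so `deghat = sup over bases of −Σ_i log N(bᵢ)`.) -/
noncomputable def deghat (k V : Type*) [Field k] [AddCommGroup V] [Module k V]
    (N : V → ℝ) : ℝ :=
  ⨆ b : Module.Basis (Fin (Module.finrank k V)) k V, -∑ i, Real.log (N (b i))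

/-- The positive Arakelov degree: the supremum of the Arakelov degrees of all subspaces. -/
noncomputable def deghatPlus (k V : Type*) [Field k] [AddCommGroup V] [Module k V]
    (N : V → ℝ) : ℝ :=
  ⨆ W : Submodule k V, deghat k W (fun w => N (w : V))

/-- The norm `‖f‖_{ng} = exp(−inf_{ξ∈X^an}(g_{(f)} + ng)(ξ))` on `H⁰(nD)`, for `f ≠ 0`. -/
noncomputable def CurveData.gnorm (C : CurveData k F P) (g : GreenFunction P) (n : ℕ)
    (f : F) : ℝ :=
  if f = 0 then 0
  else Real.exp (-sInf {r : ℝ | ∃ (x : P) (t : ℝ), 0 ≤ t ∧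
    r = (C.ord x f : ℝ) * t + (n : ℝ) * g.val x t})

/-- The `χ`-volume of a metrised ℝ-divisor `(D, g)` with `D = g.slope`:
`limsup_n 2·deghat(H⁰(nD), ‖·‖_{ng})/n²`. -/
noncomputable def CurveData.volChi (C : CurveData k F P) (g : GreenFunction P) : ℝ :=
  Filter.limsup (fun n : ℕ =>
    deghat k ↥(C.H0 fun x => (n : ℝ) * g.slope x) (fun f => C.gnorm g n (f : F))
      / ((n : ℝ) ^ 2 / 2)) Filter.atTop

/-- The arithmetic volume of a metrised ℝ-divisor `(D, g)` with `D = g.slope`: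
`limsup_n 2·deghat₊(H⁰(nD), ‖·‖_{ng})/n²`. -/
noncomputable def CurveData.volHat (C : CurveData k F P) (g : GreenFunction P) : ℝ :=
  Filter.limsup (fun n : ℕ =>
    deghatPlus k ↥(C.H0 fun x => (n : ℝ) * g.slope x) (fun f => C.gnorm g n (f : F))
      / ((n : ℝ) ^ 2 / 2)) Filter.atTop

/-- A metrised ℝ-divisor `(D,g)` (with `D = g.slope`) is big if `vol-hat(D,g) > 0`. -/
def CurveData.Big (C : CurveData k F P) (g : GreenFunction P) : Prop :=
  0 < C.volHat g

/-- A metrised ℝ-divisor is pseudo-effective if its sum with every big metrised ℝ-divisor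
is big. -/
def CurveData.PseudoEffective (C : CurveData k F P) (g : GreenFunction P) : Prop :=
  ∀ g₀ : GreenFunction P, C.Big g₀ → C.Big (g.add g₀)


section AuxLin

variable {ι : Type*} [Fintype ι]



/-- ℚ-linearly independent rational vectors are ℝ-linearly independent. -/
lemma ratCast_linearIndependent {s : ℕ} {v : Fin s → ι → ℚ}
    (hv : LinearIndependent ℚ v) :
    LinearIndependent ℝ (fun j (x : ι) => ((v j x : ℝ))) := by
  classical
  -- dual functionals
  have hdual : ∀ j : Fin s, ∃ u : ι → ℚ, ∀ i : Fin s,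
      (∑ x, v i x * u x) = if i = j then 1 else 0 := by
    intro j
    set W := Submodule.span ℚ (Set.range v)
    set b : Module.Basis (Fin s) ℚ W := Module.Basis.span hv
    obtain ⟨φ, hφ⟩ := LinearMap.exists_extend (b.coord j)
    refine ⟨fun x => φ (Pi.single x 1), ?_⟩
    intro i
    have h1 : ∀ w : ι → ℚ, φ w = ∑ x, w x * φ (Pi.single x 1) := by
      intro w
      conv_lhs => rw [pi_eq_sum_univ w]
      rw [map_sum]
      refine Finset.sum_congr rfl fun x _ => ?_
      rw [map_smul, smul_eq_mul]
      have : (fun j => if x = j then (1:ℚ) else 0) = Pi.single x 1 := by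
        funext y
        simp [Pi.single_apply, eq_comm]
      rw [this]
    rw [← h1 (v i)]
    have h2 : v i = W.subtype (b i) := by
      have := Module.Basis.span_apply hv i
      exact (congrArg Subtype.val this).symm
    rw [h2]
    have h3 := LinearMap.congr_fun hφ (b i)
    simp only [LinearMap.comp_apply] at h3
    rw [h3]
    simp [Module.Basis.coord_apply, Module.Basis.repr_self, Finsupp.single_apply]
  rw [Fintype.linearIndependent_iff]
  intro g hg j
  obtain ⟨u, hu⟩ := hdual j
  have hg' : ∀ x : ι, (∑ i, g i * (v i x : ℝ)) = 0 := by
    intro x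
    have := congrFun hg x
    simpa [Finset.sum_apply] using this
  have key : (∑ x, (u x : ℝ) * (∑ i, g i * (v i x : ℝ))) = g j := by
    have swap : (∑ x, (u x : ℝ) * (∑ i, g i * (v i x : ℝ)))
        = ∑ i, g i * (∑ x, (v i x : ℝ) * (u x : ℝ)) := by
      simp_rw [Finset.mul_sum]
      rw [Finset.sum_comm]
      refine Finset.sum_congr rfl fun i _ => ?_
      refine Finset.sum_congr rfl fun x _ => ?_
      ring
    rw [swap]
    have : ∀ i, (∑ x, (v i x : ℝ) * (u x : ℝ)) = (if i = j then (1:ℝ) else 0) := by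
      intro i
      have := hu i
      have hcast := congrArg (fun q : ℚ => (q : ℝ)) this
      push_cast at hcast
      rw [hcast]
      split <;> norm_num
    simp only [this, mul_ite, mul_one, mul_zero]
    simp
  rw [← key]
  simp only [hg', mul_zero, Finset.sum_const_zero]

/-- The linear map `y ↦ (x ↦ ∑ i, A x i * y i)`. -/
noncomputable def rowMap (𝕜 : Type*) [Field 𝕜] {m : ℕ} (A : ι → Fin m → 𝕜) :
    (Fin m → 𝕜) →ₗ[𝕜] (ι → 𝕜) where
  toFun y := fun x => ∑ i, A x i * y i
  map_add' y z := by
    funext x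
    simp [mul_add, Finset.sum_add_distrib]
  map_smul' c y := by
    funext x
    simp only [Pi.smul_apply, smul_eq_mul, RingHom.id_apply, Finset.mul_sum]
    refine Finset.sum_congr rfl fun i _ => by ring

lemma rat_kernel_dense {m : ℕ} (A : ι → Fin m → ℚ)
    (v : Fin m → ℝ) (hv : ∀ x, (∑ i, (A x i : ℝ) * v i) = 0) :
    ∀ ε > 0, ∃ q : Fin m → ℚ, (∀ x, (∑ i, A x i * q i) = 0) ∧
      ∀ i, |(q i : ℝ) - v i| < ε := by
  classical
  intro ε hε
  set L := rowMap ℚ A with hL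
  set Ar : ι → Fin m → ℝ := fun x i => (A x i : ℝ) with hAr
  set Lr := rowMap ℝ Ar with hLr
  set K := LinearMap.ker L with hK
  set s := Module.finrank ℚ K with hs
  let c : Module.Basis (Fin s) ℚ K := Module.finBasis ℚ K
  set kk : Fin s → (Fin m → ℚ) := fun j => (c j : Fin m → ℚ) with hkk
  have hindQ : LinearIndependent ℚ kk :=
    c.linearIndependent.map' K.subtype (Submodule.ker_subtype K)
  have hindR : LinearIndependent ℝ (fun j (i : Fin m) => ((kk j i : ℝ))) :=
    ratCast_linearIndependent hindQ
  set kr : Fin s → (Fin m → ℝ) := fun j i => ((kk j i : ℝ)) with hkr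
  -- each kk j is in the kernel over ℚ
  have hker : ∀ j x, (∑ i, A x i * kk j i) = 0 := by
    intro j x
    have : L (kk j) = 0 := (c j).2
    exact congrFun this x
  have hkerR : ∀ j, kr j ∈ LinearMap.ker Lr := by
    intro j
    rw [LinearMap.mem_ker]
    funext x
    have := congrArg (fun q : ℚ => (q : ℝ)) (hker j x)
    push_cast at this
    simpa [Lr, rowMap, Ar, kr] using this
  -- span of kr equals kernel of Lr
  set Vr := Submodule.span ℝ (Set.range kr) with hVr
  have hle : Vr ≤ LinearMap.ker Lr := by
    rw [hVr, Submodule.span_le]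
    rintro _ ⟨j, rfl⟩
    exact hkerR j
  have hrankV : Module.finrank ℝ Vr = s := by
    rw [hVr, finrank_span_eq_card hindR, Fintype.card_fin]
  -- rank of range over ℝ is at least rank over ℚ
  set d := Module.finrank ℚ (LinearMap.range L) with hd
  let e : Module.Basis (Fin d) ℚ (LinearMap.range L) := Module.finBasis ℚ _
  have heind : LinearIndependent ℚ (fun j => ((e j : ι → ℚ))) :=
    e.linearIndependent.map' (LinearMap.range L).subtype (Submodule.ker_subtype _)
  have hwind : LinearIndependent ℝ (fun j (x : ι) => (((e j : ι → ℚ) x : ℝ))) :=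
    ratCast_linearIndependent heind
  have hwmem : ∀ j, (fun x => (((e j : ι → ℚ) x : ℝ))) ∈ LinearMap.range Lr := by
    intro j
    obtain ⟨y, hy⟩ := (e j).2
    refine ⟨fun i => (y i : ℝ), ?_⟩
    funext x
    have h1 : (∑ i, A x i * y i) = (e j : ι → ℚ) x := congrFun hy x
    have h2 := congrArg (fun q : ℚ => (q : ℝ)) h1
    push_cast at h2
    simpa [Lr, rowMap, Ar] using h2
  have hrange_le : (d : ℕ) ≤ Module.finrank ℝ (LinearMap.range Lr) := by
    have hsp : Submodule.span ℝ (Set.range fun j (x : ι) => (((e j : ι → ℚ) x : ℝ)))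
        ≤ LinearMap.range Lr := by
      rw [Submodule.span_le]
      rintro _ ⟨j, rfl⟩
      exact hwmem j
    calc (d : ℕ) = Module.finrank ℝ
          (Submodule.span ℝ (Set.range fun j (x : ι) => (((e j : ι → ℚ) x : ℝ)))) := by
          rw [finrank_span_eq_card hwind, Fintype.card_fin]
      _ ≤ Module.finrank ℝ (LinearMap.range Lr) := Submodule.finrank_mono hsp
  -- rank-nullity over both fields
  have hrnQ : Module.finrank ℚ (LinearMap.range L) + Module.finrank ℚ (LinearMap.ker L) = m := by
    rw [LinearMap.finrank_range_add_finrank_ker]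
    simp [Module.finrank_fin_fun]
  have hrnR : Module.finrank ℝ (LinearMap.range Lr) + Module.finrank ℝ (LinearMap.ker Lr) = m := by
    rw [LinearMap.finrank_range_add_finrank_ker]
    simp [Module.finrank_fin_fun]
  have hsK : Module.finrank ℚ (LinearMap.ker L) = s := rfl
  have hdK : Module.finrank ℚ (LinearMap.range L) = d := rfl
  have hkerR_le : Module.finrank ℝ (LinearMap.ker Lr) ≤ s := by omega
  have heq : Vr = LinearMap.ker Lr :=
    Submodule.eq_of_le_of_finrank_le hle (by rw [hrankV]; exact hkerR_le)
  -- v lies in the kernel of Lr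
  have hvmem : v ∈ Vr := by
    rw [heq, LinearMap.mem_ker]
    funext x
    simpa [Lr, rowMap, Ar] using hv x
  rw [hVr, Submodule.mem_span_range_iff_exists_fun] at hvmem
  obtain ⟨r, hr⟩ := hvmem
  -- approximate the real coefficients by rationals
  set B : ℝ := 1 + ∑ j, ∑ i, |(kk j i : ℝ)| with hB
  have hBpos : 0 < B := by
    have : (0:ℝ) ≤ ∑ j, ∑ i, |(kk j i : ℝ)| :=
      Finset.sum_nonneg fun j _ => Finset.sum_nonneg fun i _ => abs_nonneg _
    linarith
  have hεB : 0 < ε / B := div_pos hε hBpos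
  have hδ : ∀ j : Fin s, ∃ qj : ℚ, |(qj : ℝ) - r j| < ε / B := by
    intro j
    obtain ⟨qj, h1, h2⟩ := exists_rat_btwn (show r j - ε / B < r j by linarith)
    exact ⟨qj, by rw [abs_sub_lt_iff]; constructor <;> linarith⟩
  choose qc hqc using hδ
  refine ⟨fun i => ∑ j, qc j * kk j i, ?_, ?_⟩
  · intro x
    have : (∑ i, A x i * ∑ j, qc j * kk j i) = ∑ j, qc j * (∑ i, A x i * kk j i) := by
      simp_rw [Finset.mul_sum]
      rw [Finset.sum_comm]
      exact Finset.sum_congr rfl fun j _ => Finset.sum_congr rfl fun i _ => by ring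
    rw [this]
    simp [hker]
  · intro i
    have hvi : v i = ∑ j, r j * (kk j i : ℝ) := by
      have := congrFun hr i
      simpa [kr, Finset.sum_apply] using this.symm
    have hqi : ((∑ j, qc j * kk j i : ℚ) : ℝ) = ∑ j, (qc j : ℝ) * (kk j i : ℝ) := by
      push_cast; ring_nf
    rw [hqi, hvi, ← Finset.sum_sub_distrib]
    calc |∑ j, ((qc j : ℝ) * (kk j i : ℝ) - r j * (kk j i : ℝ))|
        ≤ ∑ j, |((qc j : ℝ) - r j) * (kk j i : ℝ)| := by
          refine (Finset.abs_sum_le_sum_abs _ _).trans_eq ?_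
          exact Finset.sum_congr rfl fun j _ => by rw [sub_mul]
      _ ≤ ∑ j, (ε / B) * |(kk j i : ℝ)| := by
          refine Finset.sum_le_sum fun j _ => ?_
          rw [abs_mul]
          exact mul_le_mul_of_nonneg_right (le_of_lt (hqc j)) (abs_nonneg _)
      _ = (ε / B) * ∑ j, |(kk j i : ℝ)| := by rw [Finset.mul_sum]
      _ < ε := by
          have hb1 : ∑ j, |(kk j i : ℝ)| ≤ B - 1 := by
            rw [hB]
            have : ∑ j, |(kk j i : ℝ)| ≤ ∑ j, ∑ i', |(kk j i' : ℝ)| := by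
              refine Finset.sum_le_sum fun j _ => Finset.single_le_sum
                (fun i' _ => abs_nonneg ((kk j i' : ℝ))) (Finset.mem_univ i)
            linarith
          have h2 : (ε / B) * ∑ j, |(kk j i : ℝ)| ≤ (ε / B) * (B - 1) := by
            refine mul_le_mul_of_nonneg_left hb1 (le_of_lt hεB)
          have h3 : (ε / B) * (B - 1) < (ε / B) * B := by
            refine mul_lt_mul_of_pos_left (by linarith) hεB
          have h4 : (ε / B) * B = ε := div_mul_cancel₀ ε (ne_of_gt hBpos)
          linarith
lemma key_approx {m : ℕ} (A : ι → Fin m → ℚ) (β : ι → ℝ)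
    (a : Fin m → ℝ) (a0 : Fin m → ℚ)
    (ha : ∀ x, β x ≤ ∑ i, (A x i : ℝ) * a i)
    (ha0 : ∀ x, β x ≤ ∑ i, (A x i : ℝ) * (a0 i : ℝ)) :
    ∀ ε > 0, ∃ b : Fin m → ℚ, (∀ i, |(b i : ℝ) - a i| < ε) ∧
      ∀ x, β x ≤ ∑ i, (A x i : ℝ) * (b i : ℝ) := by
  classical
  intro ε hε
  set Sa : ι → ℝ := fun x => ∑ i, (A x i : ℝ) * a i with hSa
  set S0 : ι → ℝ := fun x => ∑ i, (A x i : ℝ) * (a0 i : ℝ) with hS0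
  set T0 : Finset ι := Finset.univ.filter (fun x => Sa x = β x ∧ S0 x = β x) with hT0
  set v : Fin m → ℝ := fun i => a i - (a0 i : ℝ) with hv
  have hvker : ∀ x : ↥T0, (∑ i, (A (x : ι) i : ℝ) * v i) = 0 := by
    rintro ⟨x, hx⟩
    rw [hT0, Finset.mem_filter] at hx
    have h1 : (∑ i, (A x i : ℝ) * v i) = Sa x - S0 x := by
      rw [hSa, hS0, ← Finset.sum_sub_distrib]
      exact Finset.sum_congr rfl fun i _ => by simp [hv]; ring
    rw [h1, hx.2.1, hx.2.2, sub_self]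
  set K : ℝ := 1 + ∑ i, |(a0 i : ℝ) - a i| with hK
  have hKpos : 0 < K := by
    have : (0:ℝ) ≤ ∑ i, |(a0 i : ℝ) - a i| :=
      Finset.sum_nonneg fun i _ => abs_nonneg _
    rw [hK]; linarith
  have hKge : ∀ i, |(a0 i : ℝ) - a i| ≤ K := by
    intro i
    have : |(a0 i : ℝ) - a i| ≤ ∑ i', |(a0 i' : ℝ) - a i'| :=
      Finset.single_le_sum (f := fun i' => |(a0 i' : ℝ) - a i'|)
        (fun i' _ => abs_nonneg _) (Finset.mem_univ i)
    rw [hK]; linarith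
  obtain ⟨θ, hθ0, hθlt⟩ := exists_rat_btwn (show (0:ℝ) < min (1/2) (ε/(4*K)) by
    refine lt_min (by norm_num) (by positivity))
  have hθpos : (0:ℝ) < (θ:ℝ) := by exact_mod_cast hθ0
  have hθhalf : (θ:ℝ) ≤ 1/2 := le_of_lt (lt_of_lt_of_le hθlt (min_le_left _ _))
  have hθK : (θ:ℝ) ≤ ε/(4*K) := le_of_lt (lt_of_lt_of_le hθlt (min_le_right _ _))
  set Cx : ι → ℝ := fun x => 1 + ∑ i, |(A x i : ℝ)| with hCx
  have hCpos : ∀ x, 0 < Cx x := by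
    intro x
    have : (0:ℝ) ≤ ∑ i, |(A x i : ℝ)| := Finset.sum_nonneg fun i _ => abs_nonneg _
    rw [hCx]; dsimp only; linarith
  set ρ : ι → ℝ := fun x =>
    if 0 < Sa x - β x then (Sa x - β x)/(2*Cx x)
    else if 0 < S0 x - β x then (θ:ℝ)*(S0 x - β x)/(Cx x) else 1 with hρ
  have hρpos : ∀ x, 0 < ρ x := by
    intro x
    rw [hρ]
    dsimp only
    split
    · rename_i h; exact div_pos h (by have := hCpos x; linarith)
    · split
      · rename_i h; exact div_pos (mul_pos hθpos ‹_›) (hCpos x)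
      · norm_num
  set SS : Finset ℝ := insert (1:ℝ) (Finset.univ.image ρ) with hSS
  have hSSne : SS.Nonempty := ⟨1, Finset.mem_insert_self _ _⟩
  set m₁ : ℝ := SS.min' hSSne with hm₁
  have hm₁pos : 0 < m₁ := by
    have hmem : m₁ ∈ SS := SS.min'_mem hSSne
    rcases Finset.mem_insert.mp hmem with h | h
    · rw [h]; norm_num
    · obtain ⟨x, _, hx⟩ := Finset.mem_image.mp h
      rw [← hx]
      exact hρpos x
  have hm₁le : ∀ x, m₁ ≤ ρ x := by
    intro x
    exact Finset.min'_le _ _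
      (Finset.mem_insert_of_mem (Finset.mem_image_of_mem ρ (Finset.mem_univ x)))
  set ε₁ : ℝ := min (ε/4) m₁ with hε₁
  have hε₁pos : 0 < ε₁ := lt_min (by positivity) hm₁pos
  obtain ⟨q, hqker, hqcl⟩ := rat_kernel_dense (fun x : ↥T0 => A (x : ι)) v hvker ε₁ hε₁pos
  set b : Fin m → ℚ := fun i => (1-θ) * (a0 i + q i) + θ * a0 i with hb
  have hbval : ∀ i, (b i : ℝ) = (1-(θ:ℝ)) * ((a0 i : ℝ) + (q i : ℝ)) + (θ:ℝ) * (a0 i:ℝ) := by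
    intro i; rw [hb]; push_cast; ring
  refine ⟨b, ?_, ?_⟩
  · intro i
    have h1 : (b i : ℝ) - a i
        = (1-(θ:ℝ)) * ((q i : ℝ) - v i) + (θ:ℝ) * ((a0 i : ℝ) - a i) := by
      rw [hbval, hv]; ring
    rw [h1]
    have h2 : |(1-(θ:ℝ)) * ((q i : ℝ) - v i)| ≤ ε₁ := by
      rw [abs_mul]
      have h5 := hqcl i
      have h3 : |1-(θ:ℝ)| ≤ 1 := by rw [abs_le]; constructor <;> linarith
      calc |1-(θ:ℝ)| * |(q i : ℝ) - v i| ≤ 1 * ε₁ :=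
            mul_le_mul h3 (le_of_lt h5) (abs_nonneg _) (by norm_num)
        _ = ε₁ := one_mul _
    have h4 : |(θ:ℝ) * ((a0 i : ℝ) - a i)| ≤ ε/4 := by
      rw [abs_mul, abs_of_pos hθpos]
      calc (θ:ℝ) * |(a0 i : ℝ) - a i| ≤ (ε/(4*K)) * K :=
            mul_le_mul hθK (hKge i) (abs_nonneg _) (by positivity)
        _ = ε/4 := by field_simp
    calc |(1-(θ:ℝ)) * ((q i : ℝ) - v i) + (θ:ℝ) * ((a0 i : ℝ) - a i)|
        ≤ |(1-(θ:ℝ)) * ((q i : ℝ) - v i)| + |(θ:ℝ) * ((a0 i : ℝ) - a i)| := abs_add_le _ _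
      _ ≤ ε₁ + ε/4 := add_le_add h2 h4
      _ < ε := by
          have : ε₁ ≤ ε/4 := min_le_left _ _
          linarith
  · intro x
    set B1 : ℝ := ∑ i, (A x i : ℝ) * ((a0 i:ℝ) + (q i:ℝ)) with hB1
    have hsplit : (∑ i, (A x i : ℝ) * (b i : ℝ))
        = (1-(θ:ℝ)) * (∑ i, (A x i : ℝ) * ((a0 i:ℝ) + (q i:ℝ))) + (θ:ℝ) * S0 x := by
      rw [hS0]
      simp_rw [hbval]
      rw [Finset.mul_sum, Finset.mul_sum, ← Finset.sum_add_distrib]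
      exact Finset.sum_congr rfl fun i _ => by ring
    have hb1a : |(∑ i, (A x i : ℝ) * ((a0 i:ℝ) + (q i:ℝ))) - Sa x| ≤ Cx x * ε₁ := by
      have h1 : (∑ i, (A x i : ℝ) * ((a0 i:ℝ) + (q i:ℝ))) - Sa x
          = ∑ i, (A x i : ℝ) * ((q i : ℝ) - v i) := by
        rw [hSa, ← Finset.sum_sub_distrib]
        exact Finset.sum_congr rfl fun i _ => by rw [hv]; ring
      rw [h1]
      calc |∑ i, (A x i : ℝ) * ((q i : ℝ) - v i)|
          ≤ ∑ i, |(A x i : ℝ) * ((q i : ℝ) - v i)| := Finset.abs_sum_le_sum_abs _ _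
        _ ≤ ∑ i, |(A x i : ℝ)| * ε₁ := by
            refine Finset.sum_le_sum fun i _ => ?_
            rw [abs_mul]
            exact mul_le_mul_of_nonneg_left (le_of_lt (hqcl i)) (abs_nonneg _)
        _ = (∑ i, |(A x i : ℝ)|) * ε₁ := by rw [Finset.sum_mul]
        _ ≤ Cx x * ε₁ := by
            refine mul_le_mul_of_nonneg_right ?_ (le_of_lt hε₁pos)
            rw [hCx]; dsimp only; linarith
    by_cases hx0 : x ∈ T0
    · have hxq : (∑ i, A x i * q i) = 0 := hqker ⟨x, hx0⟩
      rw [hT0, Finset.mem_filter] at hx0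
      have h1 : (∑ i, (A x i : ℝ) * ((a0 i:ℝ) + (q i:ℝ))) = S0 x := by
        have hc := congrArg (fun z : ℚ => (z:ℝ)) hxq
        push_cast at hc
        rw [hS0]
        calc (∑ i, (A x i : ℝ) * ((a0 i:ℝ) + (q i:ℝ)))
            = (∑ i, ((A x i : ℝ) * (a0 i:ℝ) + (A x i : ℝ) * (q i:ℝ))) :=
              Finset.sum_congr rfl fun i _ => by ring
          _ = (∑ i, (A x i : ℝ) * (a0 i:ℝ)) + (∑ i, (A x i : ℝ) * (q i:ℝ)) :=
              Finset.sum_add_distrib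
          _ = (∑ i, (A x i : ℝ) * (a0 i:ℝ)) := by rw [hc]; ring
      rw [hsplit, h1, hx0.2.2]
      have heq : (1-(θ:ℝ)) * β x + (θ:ℝ) * β x = β x := by ring
      rw [heq]
    · have hsx : 0 ≤ Sa x - β x := by have := ha x; rw [hSa]; linarith
      have hs0x : 0 ≤ S0 x - β x := by have := ha0 x; rw [hS0]; linarith
      have hnot : 0 < Sa x - β x ∨ (Sa x - β x = 0 ∧ 0 < S0 x - β x) := by
        rcases lt_or_eq_of_le hsx with h | h
        · exact Or.inl h
        · rcases lt_or_eq_of_le hs0x with h' | h'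
          · exact Or.inr ⟨h.symm, h'⟩
          · exfalso
            refine hx0 ?_
            rw [hT0, Finset.mem_filter]
            exact ⟨Finset.mem_univ x, by linarith, by linarith⟩
      have hε₁ρ : ε₁ ≤ ρ x := le_trans (min_le_right _ _) (hm₁le x)
      have hCε : Cx x * ε₁ ≤ Cx x * ρ x :=
        mul_le_mul_of_nonneg_left hε₁ρ (le_of_lt (hCpos x))
      have hlow : (∑ i, (A x i : ℝ) * ((a0 i:ℝ) + (q i:ℝ))) ≥ Sa x - Cx x * ε₁ := by
        have h6 := abs_le.mp hb1a
        linarith [h6.1]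
      rcases hnot with h | ⟨h1, h2⟩
      · have hρx : ρ x = (Sa x - β x)/(2*Cx x) := by rw [hρ]; dsimp only; rw [if_pos h]
        have hCρ : Cx x * ρ x = (Sa x - β x)/2 := by
          rw [hρx]
          have := hCpos x
          field_simp
        have hb1ge : (∑ i, (A x i : ℝ) * ((a0 i:ℝ) + (q i:ℝ))) ≥ β x := by
          have h7 : Cx x * ε₁ ≤ (Sa x - β x)/2 := by rw [← hCρ]; exact hCε
          have h8 : Sa x - Cx x * ε₁ ≥ β x := by
            clear_value Sa S0 T0 v K Cx ρ SS m₁ ε₁ b B1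
            linarith
          exact le_trans h8 hlow
        rw [hsplit]
        have hS0ge : β x ≤ S0 x := by have := ha0 x; rw [hS0]; linarith
        nlinarith [mul_nonneg (by linarith : (0:ℝ) ≤ 1 - (θ:ℝ))
            (by linarith : (0:ℝ) ≤ B1 - β x),
          mul_nonneg (le_of_lt hθpos) (by linarith : (0:ℝ) ≤ S0 x - β x)]
      · have hρx : ρ x = (θ:ℝ)*(S0 x - β x)/(Cx x) := by
          rw [hρ]; dsimp only; rw [if_neg (by linarith), if_pos h2]
        have hCρ : Cx x * ρ x = (θ:ℝ)*(S0 x - β x) := by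
          rw [hρx]
          have := (hCpos x).ne'
          field_simp
        rw [hsplit]
        have hkey : Cx x * ε₁ ≤ (θ:ℝ)*(S0 x - β x) := by rw [← hCρ]; exact hCε
        have hCe0 : (0:ℝ) ≤ Cx x * ε₁ :=
          mul_nonneg (le_of_lt (hCpos x)) (le_of_lt hε₁pos)
        nlinarith [mul_nonneg (by linarith : (0:ℝ) ≤ 1 - (θ:ℝ))
            (by linarith : (0:ℝ) ≤ B1 - Sa x + Cx x * ε₁),
          mul_nonneg (le_of_lt hθpos) hCe0]

end AuxLin

section AuxGreen

lemma GreenFunction.exists_lowerBound {P : Type*} (g : GreenFunction P) (x : P) :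
    ∃ M : ℝ, ∀ t : ℝ, 0 ≤ t → M ≤ g.val x t - g.slope x * t := by
  obtain ⟨L, hL⟩ := g.phi_tendsto x
  have hev : ∀ᶠ t in Filter.atTop, L - 1 ≤ g.val x t - g.slope x * t :=
    hL.eventually (eventually_ge_nhds (by linarith))
  obtain ⟨T, hT⟩ := Filter.eventually_atTop.mp hev
  have hT'0 : (0:ℝ) ≤ max T 0 := le_max_right _ _
  have hcont : ContinuousOn (fun t => g.val x t - g.slope x * t) (Set.Icc 0 (max T 0)) :=
    ((g.contOn x).mono (Set.Icc_subset_Ici_self)).sub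
      ((continuous_const.mul continuous_id).continuousOn)
  obtain ⟨t0, ht0, hmin⟩ := isCompact_Icc.exists_isMinOn (Set.nonempty_Icc.mpr hT'0) hcont
  refine ⟨min (g.val x t0 - g.slope x * t0) (L - 1), fun t ht => ?_⟩
  rcases le_total t (max T 0) with h | h
  · exact le_trans (min_le_left _ _) (hmin ⟨ht, h⟩)
  · exact le_trans (min_le_right _ _) (hT t (le_trans (le_max_left _ _) h))

/-- Quantitative branch bound used in the approximation argument. -/
lemma aux_branch (v : ℝ → ℝ) (D E1 E2 M r ε : ℝ)
    (hM : ∀ t, 0 ≤ t → M ≤ v t - D * t)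
    (hr : ∀ t, 0 ≤ t → r ≤ E1 * t + v t)
    (hpos1 : 0 ≤ E1 + D)
    (hpos2 : 0 ≤ E2 + D)
    (hεpos : 0 < ε)
    (hclose : |E2 - E1| ≤ if 0 < E1 + D then
      min ((E1 + D)/2) (ε / max 1 (2*(r - M)/(E1 + D))) else 1) :
    ∀ t, 0 ≤ t → r - ε ≤ E2 * t + v t := by
  intro t ht
  by_cases hge : E1 ≤ E2
  · have h1 : E1 * t + v t ≤ E2 * t + v t := by nlinarith
    have h2 := hr t ht
    linarith
  · push_neg at hge
    have hc : 0 < E1 + D := by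
      rcases lt_or_eq_of_le hpos1 with h | h
      · exact h
      · exfalso; nlinarith
    rw [if_pos hc] at hclose
    have hTx1 : (1:ℝ) ≤ max 1 (2*(r - M)/(E1 + D)) := le_max_left _ _
    have hTxpos : (0:ℝ) < max 1 (2*(r - M)/(E1 + D)) := by linarith
    have hδ : E1 - E2 ≤ min ((E1 + D)/2) (ε / max 1 (2*(r - M)/(E1 + D))) := by
      have := abs_le.mp hclose
      linarith [this.1]
    have hδ1 : E1 - E2 ≤ (E1 + D)/2 := le_trans hδ (min_le_left _ _)
    have hδ2 : E1 - E2 ≤ ε / max 1 (2*(r - M)/(E1 + D)) := le_trans hδ (min_le_right _ _)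
    rcases le_total t (max 1 (2*(r - M)/(E1 + D))) with hcase | hcase
    · -- small t : use closeness
      have h2 := hr t ht
      have h3 : (E1 - E2) * t ≤ (E1 - E2) * max 1 (2*(r - M)/(E1 + D)) := by
        refine mul_le_mul_of_nonneg_left hcase (by linarith)
      have h4 : (E1 - E2) * max 1 (2*(r - M)/(E1 + D)) ≤ ε := by
        calc (E1 - E2) * max 1 (2*(r - M)/(E1 + D))
            ≤ (ε / max 1 (2*(r - M)/(E1 + D))) * max 1 (2*(r - M)/(E1 + D)) :=
              mul_le_mul_of_nonneg_right hδ2 (le_of_lt hTxpos)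
          _ = ε := div_mul_cancel₀ ε (ne_of_gt hTxpos)
      nlinarith
    · -- large t : use the slope slack
      have hM' := hM t ht
      have hE2D : (E1 + D)/2 ≤ E2 + D := by linarith
      have h5 : ((E1 + D)/2) * t ≤ (E2 + D) * t := mul_le_mul_of_nonneg_right hE2D ht
      have h6 : ((E1 + D)/2) * max 1 (2*(r - M)/(E1 + D)) ≤ ((E1 + D)/2) * t :=
        mul_le_mul_of_nonneg_left hcase (by linarith)
      have h7 : r - M ≤ ((E1 + D)/2) * max 1 (2*(r - M)/(E1 + D)) := by
        rcases le_total (r - M) 0 with h | h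
        · nlinarith
        · have h8 : 2*(r - M)/(E1 + D) ≤ max 1 (2*(r - M)/(E1 + D)) := le_max_right _ _
          have h9 : ((E1 + D)/2) * (2*(r - M)/(E1 + D))
              ≤ ((E1 + D)/2) * max 1 (2*(r - M)/(E1 + D)) :=
            mul_le_mul_of_nonneg_left h8 (by linarith)
          have h10 : ((E1 + D)/2) * (2*(r - M)/(E1 + D)) = r - M := by
            field_simp
          linarith
      have h11 : E2 * t + v t = (E2 + D) * t + (v t - D * t) := by ring
      rw [h11]
      have : r ≤ (E2 + D) * t + (v t - D * t) := by linarith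
      linarith

/-- A uniform positive `ε` compatible with finitely many constraints. -/
lemma aux_exists_eps {P : Type*} (X : Finset P) (ρ Cb : P → ℝ)
    (hρ : ∀ x ∈ X, 0 < ρ x) (hC : ∀ x ∈ X, 0 < Cb x) :
    ∃ ε' : ℝ, 0 < ε' ∧ ∀ x ∈ X, Cb x * ε' ≤ ρ x := by
  classical
  set SS : Finset ℝ := insert (1:ℝ) (X.image (fun x => ρ x / Cb x)) with hSS
  have hSSne : SS.Nonempty := ⟨1, Finset.mem_insert_self _ _⟩
  refine ⟨SS.min' hSSne, ?_, ?_⟩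
  · have hmem : SS.min' hSSne ∈ SS := SS.min'_mem hSSne
    rcases Finset.mem_insert.mp hmem with h | h
    · rw [h]; norm_num
    · obtain ⟨x, hx, hval⟩ := Finset.mem_image.mp h
      rw [← hval]
      exact div_pos (hρ x hx) (hC x hx)
  · intro x hx
    have h1 : SS.min' hSSne ≤ ρ x / Cb x :=
      Finset.min'_le _ _ (Finset.mem_insert_of_mem (Finset.mem_image_of_mem _ hx))
    have h2 : Cb x * (SS.min' hSSne) ≤ Cb x * (ρ x / Cb x) :=
      mul_le_mul_of_nonneg_left h1 (le_of_lt (hC x hx))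
    have h3 : Cb x * (ρ x / Cb x) = ρ x := by
      rw [← mul_div_assoc]
      exact mul_div_cancel_left₀ _ (ne_of_gt (hC x hx))
    linarith

/-- Common denominator for a finite family of rationals. -/
lemma aux_common_den {m : ℕ} (b : Fin m → ℚ) :
    ∃ (N : ℕ) (p : Fin m → ℤ), 0 < N ∧ ∀ i, (b i : ℝ) = (p i : ℝ) / (N : ℝ) := by
  classical
  refine ⟨∏ j, (b j).den, fun i => (b i).num * (((∏ j, (b j).den) / (b i).den : ℕ) : ℤ),
    Finset.prod_pos fun j _ => (b j).den_pos, ?_⟩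
  intro i
  have hdvd : (b i).den ∣ ∏ j, (b j).den := Finset.dvd_prod_of_mem _ (Finset.mem_univ i)
  have hkd : ((∏ j, (b j).den) / (b i).den) * (b i).den = ∏ j, (b j).den :=
    Nat.div_mul_cancel hdvd
  have hNpos : 0 < ∏ j, (b j).den := Finset.prod_pos fun j _ => (b j).den_pos
  have hk0 : ((∏ j, (b j).den) / (b i).den) ≠ 0 := by
    intro h
    rw [h, zero_mul] at hkd
    omega
  have hd0 : ((b i).den : ℝ) ≠ 0 := by exact_mod_cast (b i).den_ne_zero
  have hk0' : ((((∏ j, (b j).den) / (b i).den : ℕ)) : ℝ) ≠ 0 := by exact_mod_cast hk0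
  have hkd' : ((((∏ j, (b j).den) / (b i).den : ℕ)) : ℝ) * ((b i).den : ℝ)
      = ((∏ j, (b j).den : ℕ) : ℝ) := by exact_mod_cast hkd
  rw [Rat.cast_def]
  have h2 : (((b i).num * (((∏ j, (b j).den) / (b i).den : ℕ) : ℤ) : ℤ) : ℝ)
      = ((b i).num : ℝ) * ((((∏ j, (b j).den) / (b i).den : ℕ)) : ℝ) := by
    rw [Int.cast_mul, Int.cast_natCast]
  rw [h2, ← hkd', mul_comm (((b i).num : ℝ)) _]
  exact (mul_div_mul_left ((b i).num : ℝ) ((b i).den : ℝ) hk0').symm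

end AuxGreen

section AuxOrd

variable {k F P : Type*} [Field k] [Field F] [Algebra k F]

lemma CurveData.ord_one (C : CurveData k F P) (x : P) : C.ord x 1 = 0 := by
  have h := C.ord_mul x (f := (1:F)) (g := (1:F)) one_ne_zero one_ne_zero
  rw [mul_one] at h
  omega

lemma CurveData.ord_inv (C : CurveData k F P) (x : P) {f : F} (hf : f ≠ 0) :
    C.ord x f⁻¹ = - C.ord x f := by
  have h := C.ord_mul x hf (inv_ne_zero hf)
  rw [mul_inv_cancel₀ hf, C.ord_one] at h
  omega

lemma CurveData.ord_pow (C : CurveData k F P) (x : P) {f : F} (hf : f ≠ 0) (n : ℕ) :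
    C.ord x (f ^ n) = n * C.ord x f := by
  induction n with
  | zero => simpa using C.ord_one x
  | succ n ih =>
    rw [pow_succ, C.ord_mul x (pow_ne_zero n hf) hf, ih]
    push_cast
    ring

lemma CurveData.ord_zpow (C : CurveData k F P) (x : P) {f : F} (hf : f ≠ 0) (n : ℤ) :
    C.ord x (f ^ n) = n * C.ord x f := by
  cases n with
  | ofNat n => simpa using C.ord_pow x hf n
  | negSucc n =>
    rw [zpow_negSucc, C.ord_inv x (pow_ne_zero _ hf), C.ord_pow x hf]
    simp [Int.negSucc_eq]
    ring

lemma CurveData.ord_prod (C : CurveData k F P) (x : P) {α : Type*} (s : Finset α)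
    (f : α → F) (hf : ∀ i ∈ s, f i ≠ 0) :
    (∏ i ∈ s, f i) ≠ 0 ∧ C.ord x (∏ i ∈ s, f i) = ∑ i ∈ s, C.ord x (f i) := by
  classical
  induction s using Finset.cons_induction with
  | empty => simpa using C.ord_one x
  | cons a s ha ih =>
    have hfa : f a ≠ 0 := hf a (Finset.mem_cons_self a s)
    obtain ⟨h1, h2⟩ := ih (fun i hi => hf i (Finset.mem_cons_of_mem hi))
    refine ⟨by rw [Finset.prod_cons]; exact mul_ne_zero hfa h1, ?_⟩
    rw [Finset.prod_cons, Finset.sum_cons, C.ord_mul x hfa h1, h2]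

end AuxOrd

section MainAuxEasy

variable {k F P : Type*} [Field k] [Field F] [Algebra k F]

lemma aux_RHS1_le (C : CurveData k F P) (g : GreenFunction P) :
    (⨆ E ∈ {E : P → ℝ |
        (∃ (n : ℕ) (f : F), 0 < n ∧ f ≠ 0 ∧ ∀ x, (n : ℝ) * E x = (C.ord x f : ℝ)) ∧
        ∀ x, 0 ≤ E x + g.slope x},
      ⨅ (x : P) (t : ℝ) (_ : 0 ≤ t), ((E x * t + g.val x t : ℝ) : EReal))
    ≤ C.lambdaEss g := by
  refine iSup₂_le fun E hE => ?_
  obtain ⟨⟨n, f, hn, hf, hord⟩, hpos⟩ := hE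
  refine le_iSup₂_of_le E ⟨?_, hpos⟩ le_rfl
  have hn0 : (n:ℝ) ≠ 0 := Nat.cast_ne_zero.mpr hn.ne'
  have hEeq : E = (n : ℝ)⁻¹ • (fun x => (C.ord x f : ℝ)) := by
    funext x
    have h1 := hord x
    rw [Pi.smul_apply, smul_eq_mul]
    field_simp
    linarith
  rw [CurveData.IsPrincipalR, hEeq]
  exact Submodule.smul_mem _ _ (Submodule.subset_span ⟨f, hf, rfl⟩)

lemma aux_term_eq (C : CurveData k F P) (g : GreenFunction P) {n : ℕ} (hn : 0 < n) (f : F)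
    (E : P → ℝ) (hord : ∀ x, (n : ℝ) * E x = (C.ord x f : ℝ)) :
    (⨅ (x : P) (t : ℝ) (_ : 0 ≤ t), ((E x * t + g.val x t : ℝ) : EReal))
    = ⨅ (x : P) (t : ℝ) (_ : 0 ≤ t),
        ((((C.ord x f : ℝ) * t + (n : ℝ) * g.val x t) / (n : ℝ) : ℝ) : EReal) := by
  refine iInf_congr fun x => iInf_congr fun t => iInf_congr fun ht => ?_
  congr 1
  have hn0 : (n:ℝ) ≠ 0 := Nat.cast_ne_zero.mpr hn.ne'
  rw [← hord x]
  field_simp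

lemma aux_RHS1_eq_RHS2 (C : CurveData k F P) (g : GreenFunction P) :
    (⨆ E ∈ {E : P → ℝ |
        (∃ (n : ℕ) (f : F), 0 < n ∧ f ≠ 0 ∧ ∀ x, (n : ℝ) * E x = (C.ord x f : ℝ)) ∧
        ∀ x, 0 ≤ E x + g.slope x},
      ⨅ (x : P) (t : ℝ) (_ : 0 ≤ t), ((E x * t + g.val x t : ℝ) : EReal))
    = ⨆ (n : ℕ) (_ : 0 < n) (f : F)
        (_ : f ∈ C.H0 (fun x => (n : ℝ) * g.slope x)) (_ : f ≠ 0),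
        ⨅ (x : P) (t : ℝ) (_ : 0 ≤ t),
          ((((C.ord x f : ℝ) * t + (n : ℝ) * g.val x t) / (n : ℝ) : ℝ) : EReal) := by
  apply le_antisymm
  · refine iSup₂_le fun E hE => ?_
    obtain ⟨⟨n, f, hn, hf, hord⟩, hpos⟩ := hE
    have hmem : f ∈ C.H0 (fun x => (n : ℝ) * g.slope x) := by
      rw [C.mem_H0]
      intro _ x
      have h1 := hpos x
      have h2 := hord x
      have hn0 : (0:ℝ) ≤ (n:ℝ) := Nat.cast_nonneg n
      nlinarith
    refine le_iSup_of_le n (le_iSup_of_le hn (le_iSup_of_le f (le_iSup_of_le hmem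
      (le_iSup_of_le hf (le_of_eq (aux_term_eq C g hn f E hord))))))
  · refine iSup_le fun n => iSup_le fun hn => iSup_le fun f => iSup_le fun hmem =>
      iSup_le fun hf => ?_
    have hn0 : (n:ℝ) ≠ 0 := Nat.cast_ne_zero.mpr hn.ne'
    have hordE : ∀ x, (n : ℝ) * ((C.ord x f : ℝ) / (n:ℝ)) = (C.ord x f : ℝ) := by
      intro x
      field_simp
    have hposE : ∀ x, 0 ≤ (C.ord x f : ℝ) / (n:ℝ) + g.slope x := by
      intro x
      have h1 := (C.mem_H0 _ f).mp hmem hf x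
      have h2 : (C.ord x f : ℝ) / (n:ℝ) + g.slope x
          = ((C.ord x f : ℝ) + (n:ℝ) * g.slope x) / (n:ℝ) := by
        field_simp
      rw [h2]
      exact div_nonneg h1 (Nat.cast_nonneg n)
    exact le_iSup₂_of_le (fun x => (C.ord x f : ℝ) / (n:ℝ)) ⟨⟨n, f, hn, hf, hordE⟩, hposE⟩
      (le_of_eq (aux_term_eq C g hn f _ hordE).symm)

end MainAuxEasy

section MainHard

variable {k F P : Type*} [Field k] [Field F] [Algebra k F]

lemma aux_main_le (C : CurveData k F P) (g : GreenFunction P)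
    (hQ : ∃ (n : ℕ) (f : F), 0 < n ∧ f ≠ 0 ∧
      ∀ x, 0 ≤ (C.ord x f : ℝ) + (n : ℝ) * g.slope x) :
    C.lambdaEss g ≤
      ⨆ E ∈ {E : P → ℝ |
          (∃ (n : ℕ) (f : F), 0 < n ∧ f ≠ 0 ∧ ∀ x, (n : ℝ) * E x = (C.ord x f : ℝ)) ∧
          ∀ x, 0 ≤ E x + g.slope x},
        ⨅ (x : P) (t : ℝ) (_ : 0 ≤ t), ((E x * t + g.val x t : ℝ) : EReal) := by
  classical
  obtain ⟨n₀, f₀, hn₀, hf₀, hQpos⟩ := hQ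
  rw [CurveData.lambdaEss]
  refine iSup₂_le fun E hE => ?_
  obtain ⟨hEP, hEpos⟩ := hE
  rw [CurveData.IsPrincipalR, Submodule.mem_span_set'] at hEP
  obtain ⟨m, coeff, vecs, hsum⟩ := hEP
  have hvecs : ∀ i, ∃ f : F, f ≠ 0 ∧ (vecs i : P → ℝ) = fun x => (C.ord x f : ℝ) :=
    fun i => (vecs i).2
  choose ff hff0 hffeq using hvecs
  set FF : Fin (m+1) → F := Fin.snoc ff f₀ with hFF
  set aa : Fin (m+1) → ℝ := Fin.snoc coeff 0 with haa
  set a0 : Fin (m+1) → ℚ := Fin.snoc (fun _ => 0) (1/(n₀:ℚ)) with ha0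
  have hFF0 : ∀ i, FF i ≠ 0 := by
    intro i
    refine Fin.lastCases ?_ ?_ i
    · rw [hFF]; simpa [Fin.snoc_last] using hf₀
    · intro j; rw [hFF]; simpa [Fin.snoc_castSucc] using hff0 j
  have hEeq : ∀ x, E x = ∑ i, aa i * (C.ord x (FF i) : ℝ) := by
    intro x
    rw [Fin.sum_univ_castSucc]
    simp only [haa, hFF, Fin.snoc_castSucc, Fin.snoc_last, zero_mul, add_zero]
    have h1 := congrFun hsum x
    rw [Finset.sum_apply] at h1
    rw [← h1]
    refine Finset.sum_congr rfl fun i _ => ?_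
    simp only [Pi.smul_apply, smul_eq_mul]
    rw [congrFun (hffeq i) x]
  have hXfin : (⋃ i, Function.support fun x => C.ord x (FF i)).Finite :=
    Set.finite_iUnion fun i => C.ord_support_finite (hFF0 i)
  set X₀ : Finset P := hXfin.toFinset with hX₀
  have hout : ∀ x, x ∉ X₀ → ∀ i, C.ord x (FF i) = 0 := by
    intro x hx i
    by_contra hne
    exact hx (hXfin.mem_toFinset.mpr (Set.mem_iUnion.mpr ⟨i, hne⟩))
  have hEout : ∀ x, x ∉ X₀ → E x = 0 := by
    intro x hx
    rw [hEeq x]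
    refine Finset.sum_eq_zero fun i _ => by rw [hout x hx i]; simp
  have key : ∀ r : ℝ, ((r:EReal) < ⨅ (x : P) (t : ℝ) (_ : 0 ≤ t),
        ((E x * t + g.val x t : ℝ) : EReal)) →
      ∀ ε : ℝ, 0 < ε → (((r - ε : ℝ)) : EReal) ≤
      ⨆ E' ∈ {E' : P → ℝ |
          (∃ (n : ℕ) (f : F), 0 < n ∧ f ≠ 0 ∧ ∀ x, (n : ℝ) * E' x = (C.ord x f : ℝ)) ∧
          ∀ x, 0 ≤ E' x + g.slope x},
        ⨅ (x : P) (t : ℝ) (_ : 0 ≤ t), ((E' x * t + g.val x t : ℝ) : EReal) := by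
    intro r hr ε hε
    have hpt : ∀ x (t:ℝ), 0 ≤ t → r ≤ E x * t + g.val x t := by
      intro x t ht
      have h1 : (r : EReal) < ((E x * t + g.val x t : ℝ) : EReal) :=
        lt_of_lt_of_le hr (iInf_le_of_le x (iInf_le_of_le t (iInf_le _ ht)))
      exact le_of_lt (EReal.coe_lt_coe_iff.mp h1)
    choose Mf hMf using fun x => g.exists_lowerBound x
    set ρ : P → ℝ := fun x => if 0 < E x + g.slope x then
      min ((E x + g.slope x)/2) (ε / max 1 (2*(r - Mf x)/(E x + g.slope x))) else 1 with hρ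
    have hρpos : ∀ x, 0 < ρ x := by
      intro x
      rw [hρ]
      dsimp only
      split
      · rename_i h
        refine lt_min (by linarith) ?_
        have h1 : (0:ℝ) < max 1 (2*(r - Mf x)/(E x + g.slope x)) :=
          lt_of_lt_of_le one_pos (le_max_left _ _)
        positivity
      · norm_num
    set Cb : P → ℝ := fun x => 1 + ∑ i, |(C.ord x (FF i) : ℝ)| with hCb
    have hCbpos : ∀ x, 0 < Cb x := by
      intro x
      rw [hCb]
      dsimp only
      have : (0:ℝ) ≤ ∑ i, |(C.ord x (FF i) : ℝ)| :=
        Finset.sum_nonneg fun i _ => abs_nonneg _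
      linarith
    obtain ⟨ε', hε'pos, hε'⟩ := aux_exists_eps X₀ ρ Cb (fun x _ => hρpos x)
      (fun x _ => hCbpos x)
    have hha : ∀ x : ↥X₀,
        -g.slope (x:P) ≤ ∑ i, ((((C.ord (x:P) (FF i) : ℤ) : ℚ)) : ℝ) * aa i := by
      intro x
      have h1 : (∑ i, ((((C.ord (x:P) (FF i) : ℤ) : ℚ)) : ℝ) * aa i) = E (x:P) := by
        rw [hEeq (x:P)]
        refine Finset.sum_congr rfl fun i _ => ?_
        push_cast
        ring
      rw [h1]
      have := hEpos (x:P)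
      linarith
    have hha0 : ∀ x : ↥X₀, -g.slope (x:P)
        ≤ ∑ i, ((((C.ord (x:P) (FF i) : ℤ) : ℚ)) : ℝ) * ((a0 i : ℚ) : ℝ) := by
      intro x
      have h1 : (∑ i, ((((C.ord (x:P) (FF i) : ℤ) : ℚ)) : ℝ) * ((a0 i : ℚ) : ℝ))
          = (C.ord (x:P) f₀ : ℝ) / (n₀ : ℝ) := by
        rw [Fin.sum_univ_castSucc]
        simp only [ha0, hFF, Fin.snoc_castSucc, Fin.snoc_last]
        push_cast
        simp only [Rat.cast_zero, mul_zero, Finset.sum_const_zero, zero_add]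
        rw [mul_one_div]
      rw [h1]
      have h2 := hQpos (x:P)
      have hn0 : (0:ℝ) < (n₀:ℝ) := by exact_mod_cast hn₀
      have h3 : -g.slope (x:P) ≤ (C.ord (x:P) f₀ : ℝ) / (n₀ : ℝ) ↔
          0 ≤ (C.ord (x:P) f₀ : ℝ) / (n₀ : ℝ) + g.slope (x:P) := by constructor <;> intro <;> linarith
      rw [h3]
      have h4 : (C.ord (x:P) f₀ : ℝ) / (n₀:ℝ) + g.slope (x:P)
          = ((C.ord (x:P) f₀ : ℝ) + (n₀:ℝ) * g.slope (x:P)) / (n₀:ℝ) := by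
        field_simp
      rw [h4]
      exact div_nonneg h2 (le_of_lt hn0)
    obtain ⟨b, hbcl, hbcon⟩ := key_approx
      (fun (x : ↥X₀) i => ((C.ord (x:P) (FF i) : ℤ) : ℚ))
      (fun x : ↥X₀ => -g.slope (x:P)) aa a0 hha hha0 ε' hε'pos
    set E' : P → ℝ := fun x => ∑ i, ((b i : ℚ) : ℝ) * (C.ord x (FF i) : ℝ) with hE'
    have hE'sum : ∀ x : P, E' x
        = ∑ i, ((((C.ord x (FF i) : ℤ) : ℚ)) : ℝ) * ((b i : ℚ) : ℝ) := by
      intro x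
      rw [hE']
      refine Finset.sum_congr rfl fun i _ => ?_
      push_cast
      ring
    have hE'out : ∀ x, x ∉ X₀ → E' x = 0 := by
      intro x hx
      rw [hE']
      refine Finset.sum_eq_zero fun i _ => by rw [hout x hx i]; simp
    have hE'pos : ∀ x, 0 ≤ E' x + g.slope x := by
      intro x
      by_cases hx : x ∈ X₀
      · have h1 := hbcon ⟨x, hx⟩
        rw [← hE'sum x] at h1
        linarith
      · rw [hE'out x hx]
        have h2 := hEpos x
        rw [hEout x hx] at h2
        linarith
    have hdiff : ∀ x, x ∈ X₀ → |E' x - E x| ≤ ρ x := by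
      intro x hx
      have h1 : E' x - E x = ∑ i, (((b i : ℚ) : ℝ) - aa i) * (C.ord x (FF i) : ℝ) := by
        rw [hE', hEeq x, ← Finset.sum_sub_distrib]
        exact Finset.sum_congr rfl fun i _ => by ring
      rw [h1]
      calc |∑ i, (((b i : ℚ) : ℝ) - aa i) * (C.ord x (FF i) : ℝ)|
          ≤ ∑ i, |(((b i : ℚ) : ℝ) - aa i) * (C.ord x (FF i) : ℝ)| :=
            Finset.abs_sum_le_sum_abs _ _
        _ ≤ ∑ i, ε' * |(C.ord x (FF i) : ℝ)| := by
            refine Finset.sum_le_sum fun i _ => ?_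
            rw [abs_mul]
            exact mul_le_mul_of_nonneg_right (le_of_lt (hbcl i)) (abs_nonneg _)
        _ = ε' * ∑ i, |(C.ord x (FF i) : ℝ)| := by rw [Finset.mul_sum]
        _ ≤ Cb x * ε' := by
            rw [hCb]
            dsimp only
            have h2 : (∑ i, |(C.ord x (FF i) : ℝ)|) * ε'
                ≤ (1 + ∑ i, |(C.ord x (FF i) : ℝ)|) * ε' := by
              refine mul_le_mul_of_nonneg_right (by linarith) (le_of_lt hε'pos)
            linarith [h2]
        _ ≤ ρ x := hε' x hx
    -- membership of E' in the rational set
    obtain ⟨N, p, hN, hp⟩ := aux_common_den b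
    have hfbig0 : (∏ i, FF i ^ (p i)) ≠ 0 :=
      Finset.prod_ne_zero_iff.mpr fun i _ => zpow_ne_zero _ (hFF0 i)
    have hordf : ∀ x, C.ord x (∏ i, FF i ^ (p i)) = ∑ i, p i * C.ord x (FF i) := by
      intro x
      have h1 := (C.ord_prod x Finset.univ (fun i => FF i ^ (p i))
        (fun i _ => zpow_ne_zero _ (hFF0 i))).2
      rw [h1]
      exact Finset.sum_congr rfl fun i _ => C.ord_zpow x (hFF0 i) (p i)
    have hNr : ((N:ℝ)) ≠ 0 := by
      have : (0:ℝ) < N := by exact_mod_cast hN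
      linarith
    have hmemE' : E' ∈ {E' : P → ℝ |
        (∃ (n : ℕ) (f : F), 0 < n ∧ f ≠ 0 ∧ ∀ x, (n : ℝ) * E' x = (C.ord x f : ℝ)) ∧
        ∀ x, 0 ≤ E' x + g.slope x} := by
      refine ⟨⟨N, ∏ i, FF i ^ (p i), hN, hfbig0, ?_⟩, hE'pos⟩
      intro x
      rw [hordf x]
      push_cast
      rw [hE', Finset.mul_sum]
      refine Finset.sum_congr rfl fun i _ => ?_
      rw [hp i]
      field_simp
    -- the value bound
    have hval : ∀ x (t : ℝ), 0 ≤ t → r - ε ≤ E' x * t + g.val x t := by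
      intro x t ht
      by_cases hx : x ∈ X₀
      · refine aux_branch (g.val x) (g.slope x) (E x) (E' x) (Mf x) r ε
          (hMf x) (hpt x) (hEpos x) (hE'pos x) hε ?_ t ht
        have h1 := hdiff x hx
        rw [hρ] at h1
        exact h1
      · have h1 : E' x = E x := by rw [hE'out x hx, hEout x hx]
        have h2 := hpt x t ht
        rw [h1]
        linarith
    refine le_trans ?_ (le_iSup₂_of_le E' hmemE' le_rfl)
    refine le_iInf fun x => le_iInf fun t => le_iInf fun ht => ?_
    exact EReal.coe_le_coe_iff.mpr (hval x t ht)
  by_contra hcon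
  push_neg at hcon
  obtain ⟨z, hz1, hz2⟩ := EReal.exists_between_coe_real hcon
  obtain ⟨w, hw1, hw2⟩ := EReal.exists_between_coe_real hz1
  have hwz : w < z := EReal.coe_lt_coe_iff.mp hw2
  have h1 := key z hz2 (z - w) (by linarith)
  have h2 : z - (z - w) = w := by ring
  rw [h2] at h1
  exact absurd h1 (not_le.mpr hw1)

end MainHard

/-- Let `(D,g)` (with `D = g.slope`) be a metrised ℝ-divisor with
`Γ(D)_ℚ^× ≠ ∅`. Then the essential infimum `λ_ess(D,g)` computed over ℝ-sections equals the
one computed over ℚ-sections (elements `f^{1/n}` with `f ∈ F`, `n ≥ 1`), and also equals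
`sup_{n≥1} (1/n)·sup_{s ∈ H⁰(nD)∖{0}} (−ln‖s‖_{ng})`, where
`−ln‖s‖_{ng} = inf_{ξ∈X^an}(g_{(s)}+ng)(ξ)`. -/
theorem lambdaEss_eq_rational
    (C : CurveData k F P) (g : GreenFunction P)
    (hQ : ∃ (n : ℕ) (f : F), 0 < n ∧ f ≠ 0 ∧
      ∀ x, 0 ≤ (C.ord x f : ℝ) + (n : ℝ) * g.slope x) :
    C.lambdaEss g
      = (⨆ E ∈ {E : P → ℝ |
            (∃ (n : ℕ) (f : F), 0 < n ∧ f ≠ 0 ∧ ∀ x, (n : ℝ) * E x = (C.ord x f : ℝ)) ∧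
            ∀ x, 0 ≤ E x + g.slope x},
          ⨅ (x : P) (t : ℝ) (_ : 0 ≤ t), ((E x * t + g.val x t : ℝ) : EReal)) ∧
    C.lambdaEss g
      = ⨆ (n : ℕ) (_ : 0 < n) (f : F)
          (_ : f ∈ C.H0 (fun x => (n : ℝ) * g.slope x)) (_ : f ≠ 0),
          ⨅ (x : P) (t : ℝ) (_ : 0 ≤ t),
            ((((C.ord x f : ℝ) * t + (n : ℝ) * g.val x t) / (n : ℝ) : ℝ) : EReal) := by
  have h1 := le_antisymm (aux_main_le C g hQ) (aux_RHS1_le C g)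
  exact ⟨h1, h1.trans (aux_RHS1_eq_RHS2 C g)⟩
end

section
/- Let (D,g) be a metrised ℝ-divisor on a regular projective curve X over a trivially valued field k. Then (D,g) is ℝ-linearly equivalent to an effective metrised ℝ-divisor if and only if μ_{inf,x}(g) = 0 for all but finitely many closed points x and one of the following holds: (a) μ_inf(g) > 0, or (b) the ℝ-divisor Σ_x μ_{inf,x}(g)·x is principal. -/
open scoped BigOperators Classical

variable {k F P : Type*} [Field k] [Field F] [Algebra k F]

open scoped BigOperators Classical

variable {k F P : Type*} [Field k] [Field F] [Algebra k F]

section Helpers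

variable {P₀ : Type*}

private lemma muInfX_ne_top' (g : GreenFunction P₀) (x : P₀) : g.muInfX x ≠ ⊤ := by
  have h : g.muInfX x ≤ ((g.val x 1 / 1 : ℝ) : EReal) := iInf₂_le 1 one_pos
  exact (h.trans_lt (EReal.coe_lt_top _)).ne

private lemma coe_le_muInfX_iff (g : GreenFunction P₀) (x : P₀) (m : ℝ) :
    (m : EReal) ≤ g.muInfX x ↔ ∀ t : ℝ, 0 < t → m * t ≤ g.val x t := by
  simp only [GreenFunction.muInfX, le_iInf_iff, EReal.coe_le_coe_iff]
  exact forall₂_congr fun t ht => le_div_iff₀ ht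

private lemma val_lower {g : GreenFunction P₀} {x : P₀} (hx : g.muInfX x ≠ ⊥) :
    ∀ t : ℝ, 0 ≤ t → (g.muInfX x).toReal * t ≤ g.val x t := by
  have hcoe : (((g.muInfX x).toReal : ℝ) : EReal) = g.muInfX x :=
    EReal.coe_toReal (muInfX_ne_top' g x) hx
  have hpos : ∀ t : ℝ, 0 < t → (g.muInfX x).toReal * t ≤ g.val x t :=
    (coe_le_muInfX_iff g x _).1 hcoe.le
  intro t ht
  rcases ht.lt_or_eq with h | h
  · exact hpos t h
  · rw [← h, mul_zero]
    have hc : ContinuousWithinAt (g.val x) (Set.Ici 0) 0 := (g.contOn x) 0 Set.self_mem_Ici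
    have h1 : Filter.Tendsto (g.val x) (nhdsWithin 0 (Set.Ioi 0)) (nhds (g.val x 0)) :=
      hc.tendsto.mono_left (nhdsWithin_mono _ Set.Ioi_subset_Ici_self)
    have h2 : Filter.Tendsto (fun u : ℝ => (g.muInfX x).toReal * u)
        (nhdsWithin 0 (Set.Ioi 0)) (nhds 0) := by
      have h3 : Filter.Tendsto (fun u : ℝ => (g.muInfX x).toReal * u) (nhds 0)
          (nhds ((g.muInfX x).toReal * 0)) := (continuous_const.mul continuous_id).tendsto 0
      rw [mul_zero] at h3
      exact h3.mono_left nhdsWithin_le_nhds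
    refine le_of_tendsto_of_tendsto h2 h1 ?_
    filter_upwards [self_mem_nhdsWithin] with u hu
    exact hpos u hu

private lemma muInfX_le_slope (g : GreenFunction P₀) (x : P₀) :
    g.muInfX x ≤ ((g.slope x : ℝ) : EReal) := by
  by_cases hb : g.muInfX x = ⊥
  · simp [hb]
  have hcoe : (((g.muInfX x).toReal : ℝ) : EReal) = g.muInfX x :=
    EReal.coe_toReal (muInfX_ne_top' g x) hb
  set m := (g.muInfX x).toReal with hm
  rw [← hcoe, EReal.coe_le_coe_iff]
  by_contra hlt
  push_neg at hlt
  obtain ⟨L, hL⟩ := g.phi_tendsto x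
  have hev : ∀ᶠ t in Filter.atTop, g.val x t - g.slope x * t < L + 1 :=
    hL.eventually_lt_const (lt_add_one L)
  obtain ⟨T, hT⟩ := Filter.eventually_atTop.1 hev
  set t := max T (max 1 ((|L| + 2) / (m - g.slope x))) with htdef
  have ht1 : (1 : ℝ) ≤ t := le_trans (le_max_left _ _) (le_max_right _ _)
  have htpos : 0 < t := lt_of_lt_of_le one_pos ht1
  have hsm : 0 < m - g.slope x := sub_pos.2 hlt
  have htq : (|L| + 2) / (m - g.slope x) ≤ t := le_trans (le_max_right _ _) (le_max_right _ _)
  have hmt : m * t ≤ g.val x t := val_lower hb t htpos.le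
  have hbound : g.val x t - g.slope x * t < L + 1 := hT t (le_max_left _ _)
  have hquot : |L| + 2 ≤ (m - g.slope x) * t := by
    have := mul_le_mul_of_nonneg_left htq hsm.le
    rwa [mul_div_cancel₀ _ hsm.ne'] at this
  have hLle : L + 1 ≤ |L| + 1 := by
    have := le_abs_self L; linarith
  nlinarith [sub_mul m (g.slope x) t]

private lemma toReal_le_slope {g : GreenFunction P₀} {x : P₀} (hx : g.muInfX x ≠ ⊥) :
    (g.muInfX x).toReal ≤ g.slope x := by
  have h := muInfX_le_slope g x
  rw [← EReal.coe_toReal (muInfX_ne_top' g x) hx, EReal.coe_le_coe_iff] at h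
  exact h

private lemma coe_finsetSum {α : Type*} (s : Finset α) (f : α → ℝ) :
    ((∑ x ∈ s, f x : ℝ) : EReal) = ∑ x ∈ s, ((f x : ℝ) : EReal) := by
  classical
  induction s using Finset.cons_induction with
  | empty => simp
  | cons a s ha ih => rw [Finset.sum_cons, Finset.sum_cons, EReal.coe_add, ih]

end Helpers

section CurveHelpers

variable {k F P : Type*} [Field k] [Field F] [Algebra k F]

private lemma principal_props (C : CurveData k F P) {E : P → ℝ} (hE : C.IsPrincipalR E) :
    (Function.support E).Finite ∧ (∑ᶠ x, E x * (C.degp x : ℝ)) = 0 := by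
  refine Submodule.span_induction ?_ ?_ ?_ ?_ hE
  · rintro E' ⟨f, hf, rfl⟩
    constructor
    · refine (C.ord_support_finite hf).subset ?_
      intro x hx
      simp only [Function.mem_support] at hx ⊢
      exact_mod_cast hx
    · exact C.ord_deg_zero hf
  · constructor
    · simp [Function.support_zero]
    · simp
  · rintro a b _ _ ⟨hafin, hadeg⟩ ⟨hbfin, hbdeg⟩
    have hufin : (Function.support fun x => (a + b) x).Finite :=
      (hafin.union hbfin).subset (Function.support_add _ _)
    refine ⟨hufin, ?_⟩
    have hsup1 : (Function.support fun x => a x * (C.degp x : ℝ)).Finite :=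
      hafin.subset (Function.support_mul_subset_left _ _)
    have hsup2 : (Function.support fun x => b x * (C.degp x : ℝ)).Finite :=
      hbfin.subset (Function.support_mul_subset_left _ _)
    have : ∀ x, (a + b) x * (C.degp x : ℝ)
        = a x * (C.degp x : ℝ) + b x * (C.degp x : ℝ) := by
      intro x; simp [add_mul]
    rw [finsum_congr this, finsum_add_distrib hsup1 hsup2, hadeg, hbdeg, add_zero]
  · rintro c a _ ⟨hafin, hadeg⟩
    constructor
    · refine hafin.subset ?_
      intro x hx
      simp only [Function.mem_support, Pi.smul_apply, smul_eq_mul] at hx ⊢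
      exact fun h => hx (by rw [h, mul_zero])
    · have hsup1 : (Function.support fun x => a x * (C.degp x : ℝ)).Finite :=
        hafin.subset (Function.support_mul_subset_left _ _)
      have : ∀ x, (c • a) x * (C.degp x : ℝ) = c * (a x * (C.degp x : ℝ)) := by
        intro x; simp [mul_assoc]
      rw [finsum_congr this, ← mul_finsum _ _, hadeg, mul_zero]

/-- Core converse step: from a principal `E` dominating `-μ`, build the effective
representative. -/
private lemma core_converse (C : CurveData k F P) (g : GreenFunction P)
    (hnb : ∀ x, g.muInfX x ≠ ⊥) {E : P → ℝ} (hEp : C.IsPrincipalR E)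
    (hge : ∀ x, 0 ≤ (g.muInfX x).toReal + E x) :
    ∃ E : P → ℝ, C.IsPrincipalR E ∧ (∀ x, 0 ≤ g.slope x + E x) ∧
      ∀ (x : P), ∀ t ≥ (0:ℝ), 0 ≤ g.val x t + E x * t := by
  refine ⟨E, hEp, ?_, ?_⟩
  · intro x
    have h1 := toReal_le_slope (hnb x)
    have h2 := hge x
    linarith
  · intro x t ht
    have h1 := val_lower (hnb x) t ht
    have h2 := mul_le_mul_of_nonneg_right (by linarith [hge x] :
      -E x ≤ (g.muInfX x).toReal) ht
    rw [neg_mul] at h2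
    linarith

end CurveHelpers

/-- Let `(D,g)` (with `D = g.slope`) be a metrised ℝ-divisor on a
regular projective curve over a trivially valued field `k`. Then `(D,g)` is ℝ-linearly
equivalent to an effective metrised ℝ-divisor (i.e. there exists a principal ℝ-divisor
`E = (φ)` with `D + E ≥ 0` and `g + g_{(φ)} ≥ 0` on the whole tree) if and only if
`μ_{inf,x}(g) = 0` for all but finitely many closed points `x`, and either
(a) `μ_inf(g) = Σ_x μ_{inf,x}(g)[k(x):k] > 0`, or
(b) the ℝ-divisor `Σ_x μ_{inf,x}(g)·x` is principal. -/
theorem rLinearlyEquivalent_effective_iff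
    (C : CurveData k F P) (g : GreenFunction P) :
    (∃ E : P → ℝ, C.IsPrincipalR E ∧ (∀ x, 0 ≤ g.slope x + E x) ∧
        ∀ (x : P), ∀ t ≥ (0:ℝ), 0 ≤ g.val x t + E x * t) ↔
      ∃ hfin : {x : P | g.muInfX x ≠ 0}.Finite,
        (0 < ∑ x ∈ hfin.toFinset, g.muInfX x * ((C.degp x : ℝ) : EReal)) ∨
        ((∀ x, g.muInfX x ≠ ⊥) ∧
          C.IsPrincipalR (fun x => (g.muInfX x).toReal)) := by
  constructor
  · -- Forward direction
    rintro ⟨E, hEp, hslope, hval⟩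
    obtain ⟨hEfin, hEdeg⟩ := principal_props C hEp
    have hbotle : ∀ x, ((-E x : ℝ) : EReal) ≤ g.muInfX x := by
      intro x
      refine (coe_le_muInfX_iff g x _).2 fun t ht => ?_
      have := hval x t ht.le
      rw [neg_mul]; linarith
    have hnb : ∀ x, g.muInfX x ≠ ⊥ := fun x =>
      ((EReal.bot_lt_coe _).trans_le (hbotle x)).ne'
    set μ : P → ℝ := fun x => (g.muInfX x).toReal with hμdef
    have hcoe : ∀ x, ((μ x : ℝ) : EReal) = g.muInfX x := fun x =>
      EReal.coe_toReal (muInfX_ne_top' g x) (hnb x)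
    have hμE : ∀ x, -E x ≤ μ x := by
      intro x
      have h := hbotle x
      rw [← hcoe x, EReal.coe_le_coe_iff] at h
      exact h
    have hμs : ∀ x, μ x ≤ g.slope x := fun x => toReal_le_slope (hnb x)
    have hμzero : ∀ x, g.muInfX x ≠ 0 ↔ μ x ≠ 0 := by
      intro x
      rw [← hcoe x]
      exact not_congr ⟨fun h => by exact_mod_cast h, fun h => by exact_mod_cast h⟩
    have hfin : {x : P | g.muInfX x ≠ 0}.Finite := by
      refine (hEfin.union g.slope_support_finite).subset fun x hx => ?_
      by_contra hc
      simp only [Set.mem_union, Function.mem_support, not_or, not_not] at hc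
      have h0 : μ x = 0 := le_antisymm (hc.2 ▸ hμs x) (by
        have := hμE x; rw [hc.1] at this; simpa using this)
      exact ((hμzero x).1 hx) h0
    refine ⟨hfin, ?_⟩
    set ν : P → ℝ := fun x => μ x + E x with hνdef
    have hνnn : ∀ x, 0 ≤ ν x := fun x => by have := hμE x; simp only [hνdef]; linarith
    have hμsupp : Function.support μ ⊆ ↑hfin.toFinset := by
      intro x hx
      rw [Set.Finite.coe_toFinset]
      exact (hμzero x).2 hx
    have hμdsupp : (Function.support fun x => μ x * (C.degp x : ℝ)) ⊆ ↑hfin.toFinset :=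
      fun x hx => hμsupp (Function.support_mul_subset_left _ _ hx)
    have hμd_fin : (Function.support fun x => μ x * (C.degp x : ℝ)).Finite :=
      Set.Finite.subset (hfin.toFinset.finite_toSet) hμdsupp
    have hEd_fin : (Function.support fun x => E x * (C.degp x : ℝ)).Finite :=
      hEfin.subset (Function.support_mul_subset_left _ _)
    have hνd_fin : (Function.support fun x => ν x * (C.degp x : ℝ)).Finite := by
      refine (hμd_fin.union hEd_fin).subset fun x hx => ?_
      by_contra hc
      simp only [Set.mem_union, Function.mem_support, not_or, not_not] at hc
      have h0 : ν x * (C.degp x : ℝ) = 0 := by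
        simp only [hνdef]
        rw [add_mul, hc.1, hc.2, add_zero]
      exact hx h0
    have key : ∑ x ∈ hfin.toFinset, μ x * (C.degp x : ℝ)
        = ∑ᶠ x, ν x * (C.degp x : ℝ) := by
      rw [← finsum_eq_finset_sum_of_support_subset _ hμdsupp]
      have hcong : ∀ x, μ x * (C.degp x : ℝ)
          = ν x * (C.degp x : ℝ) - E x * (C.degp x : ℝ) := by
        intro x; simp only [hνdef]; ring
      rw [finsum_congr hcong, finsum_sub_distrib hνd_fin hEd_fin, hEdeg, sub_zero]
    have hνnn' : (0:ℝ) ≤ ∑ᶠ x, ν x * (C.degp x : ℝ) :=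
      finsum_nonneg fun x => mul_nonneg (hνnn x) (Nat.cast_nonneg _)
    rcases hνnn'.lt_or_eq with hpos | hzero
    · left
      have heq : ∑ x ∈ hfin.toFinset, g.muInfX x * ((C.degp x : ℝ) : EReal)
          = ((∑ x ∈ hfin.toFinset, μ x * (C.degp x : ℝ) : ℝ) : EReal) := by
        rw [coe_finsetSum]
        refine Finset.sum_congr rfl fun x _ => ?_
        rw [EReal.coe_mul, hcoe x]
      rw [heq, key]
      exact_mod_cast EReal.coe_pos.2 hpos
    · right
      refine ⟨hnb, ?_⟩
      have hν0 : ∀ x, ν x = 0 := by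
        have hsub : (Function.support fun x => ν x * (C.degp x : ℝ)) ⊆ ↑hνd_fin.toFinset := by
          rw [Set.Finite.coe_toFinset]
        have hsum0 : ∑ x ∈ hνd_fin.toFinset, ν x * (C.degp x : ℝ) = 0 := by
          rw [← finsum_eq_finset_sum_of_support_subset _ hsub, ← hzero]
        have hall := (Finset.sum_eq_zero_iff_of_nonneg
          (fun x _ => mul_nonneg (hνnn x) (Nat.cast_nonneg _))).1 hsum0
        intro x
        have hdx : (0:ℝ) < (C.degp x : ℝ) := by exact_mod_cast C.degp_pos x
        by_cases hxm : x ∈ hνd_fin.toFinset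
        · have := hall x hxm
          exact (mul_eq_zero.1 this).resolve_right hdx.ne'
        · rw [Set.Finite.mem_toFinset, Function.mem_support, not_not] at hxm
          exact (mul_eq_zero.1 hxm).resolve_right hdx.ne'
      have hμneg : μ = -E := by
        funext x
        have := hν0 x
        simp only [hνdef] at this
        simp only [Pi.neg_apply]
        linarith
      have hgoal : C.IsPrincipalR μ := by
        rw [hμneg]
        exact Submodule.neg_mem _ hEp
      exact hgoal
  · -- Converse direction
    rintro ⟨hfin, hposE | ⟨hnb, hprin⟩⟩
    · -- Case (a): positive degree of μ; use Riemann-Roch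
      have hnb : ∀ x, g.muInfX x ≠ ⊥ := by
        intro x hx
        by_cases hxm : x ∈ hfin.toFinset
        · have hbotsum : ∑ y ∈ hfin.toFinset, g.muInfX y * ((C.degp y : ℝ) : EReal) = ⊥ := by
            rw [← Finset.add_sum_erase _ _ hxm, hx, EReal.bot_mul_of_pos, EReal.bot_add]
            exact_mod_cast EReal.coe_pos.2 (by exact_mod_cast C.degp_pos x : (0:ℝ) < (C.degp x : ℝ))
          rw [hbotsum] at hposE
          exact absurd hposE (by simp)
        · rw [Set.Finite.mem_toFinset, Set.mem_setOf_eq, not_not] at hxm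
          rw [hxm] at hx
          exact absurd hx (by simp)
      set μ : P → ℝ := fun x => (g.muInfX x).toReal with hμdef
      have hcoe : ∀ x, ((μ x : ℝ) : EReal) = g.muInfX x := fun x =>
        EReal.coe_toReal (muInfX_ne_top' g x) (hnb x)
      set S := hfin.toFinset with hSdef
      set s : ℝ := ∑ x ∈ S, μ x * (C.degp x : ℝ) with hsdef
      have hs : 0 < s := by
        have heq : ∑ x ∈ S, g.muInfX x * ((C.degp x : ℝ) : EReal) = ((s : ℝ) : EReal) := by
          rw [hsdef, coe_finsetSum]
          refine Finset.sum_congr rfl fun x _ => ?_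
          rw [EReal.coe_mul, hcoe x]
        rw [heq] at hposE
        exact_mod_cast EReal.coe_pos.1 hposE
      set B : ℝ := ∑ x ∈ S, (C.degp x : ℝ) with hBdef
      have hB : 0 ≤ B := Finset.sum_nonneg fun x _ => Nat.cast_nonneg _
      obtain ⟨n, hn⟩ := exists_nat_gt ((2 * (C.genus : ℝ) + B + 1) / s)
      have hns : 2 * (C.genus : ℝ) + B + 1 < (n : ℝ) * s := (div_lt_iff₀ hs).1 hn
      have hg0 : (0:ℝ) ≤ (C.genus : ℝ) := Nat.cast_nonneg _
      have hnpos : (0:ℝ) < (n : ℝ) := by nlinarith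
      set D0 : P → ℝ := fun x => ((⌊(n : ℝ) * μ x⌋ : ℤ) : ℝ) with hD0def
      have hμsupp : Function.support μ ⊆ ↑S := by
        intro x hx
        rw [hSdef, Set.Finite.coe_toFinset]
        show g.muInfX x ≠ 0
        intro h0
        exact hx (by simp only [hμdef]; rw [h0]; rfl)
      have hD0supp : Function.support D0 ⊆ ↑S := by
        intro x hx
        refine hμsupp ?_
        intro h0
        apply hx
        rw [hD0def]
        simp [h0]
      have hD0dsupp : (Function.support fun x => D0 x * (C.degp x : ℝ)) ⊆ ↑S :=
        fun x hx => hD0supp (Function.support_mul_subset_left _ _ hx)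
      have hdeglb : (n : ℝ) * s - B ≤ ∑ᶠ x, D0 x * (C.degp x : ℝ) := by
        rw [finsum_eq_finset_sum_of_support_subset _ hD0dsupp]
        have hterm : ∀ x ∈ S, ((n : ℝ) * μ x - 1) * (C.degp x : ℝ) ≤ D0 x * (C.degp x : ℝ) := by
          intro x _
          refine mul_le_mul_of_nonneg_right ?_ (Nat.cast_nonneg _)
          have := Int.sub_one_lt_floor ((n : ℝ) * μ x)
          rw [hD0def]
          linarith
        calc (n : ℝ) * s - B = ∑ x ∈ S, ((n : ℝ) * μ x - 1) * (C.degp x : ℝ) := by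
              rw [hsdef, hBdef, Finset.mul_sum, ← Finset.sum_sub_distrib]
              exact Finset.sum_congr rfl fun x _ => by ring
          _ ≤ _ := Finset.sum_le_sum hterm
      have hD0deg : 2 * (C.genus : ℝ) - 2 < ∑ᶠ x, D0 x * (C.degp x : ℝ) := by linarith
      have hRR := C.riemannRoch D0
        (Set.Finite.subset S.finite_toSet hD0supp)
        (fun x => ⟨⌊(n : ℝ) * μ x⌋, rfl⟩) hD0deg
      haveI := C.H0_finite D0
      have hrk : 0 < Module.finrank k ↥(C.H0 D0) := by
        have : (0:ℝ) < (Module.finrank k ↥(C.H0 D0) : ℝ) := by rw [hRR]; linarith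
        exact_mod_cast this
      have hnt : Nontrivial ↥(C.H0 D0) := Module.finrank_pos_iff.mp hrk
      obtain ⟨v, hv⟩ := exists_ne (0 : ↥(C.H0 D0))
      have hf0 : (v : F) ≠ 0 := fun h => hv (Subtype.ext h)
      have hford : ∀ x, 0 ≤ (C.ord x (v : F) : ℝ) + D0 x := (C.mem_H0 D0 (v : F)).1 v.2 hf0
      set E : P → ℝ := fun x => (n : ℝ)⁻¹ * (C.ord x (v : F) : ℝ) with hEdef
      have hEp : C.IsPrincipalR E := by
        have hmem : (fun x => ((C.ord x (v : F) : ℤ) : ℝ))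
            ∈ Submodule.span ℝ {E' : P → ℝ | ∃ f : F, f ≠ 0 ∧ E' = fun x => (C.ord x f : ℝ)} :=
          Submodule.subset_span ⟨(v : F), hf0, rfl⟩
        have := Submodule.smul_mem _ ((n : ℝ)⁻¹) hmem
        have heq : E = (n : ℝ)⁻¹ • (fun x => ((C.ord x (v : F) : ℤ) : ℝ)) := by
          funext x
          simp [hEdef, Pi.smul_apply, smul_eq_mul]
        rw [heq]
        exact this
      refine core_converse C g hnb hEp ?_
      intro x
      have h1 : (0:ℝ) ≤ (C.ord x (v : F) : ℝ) + ((⌊(n : ℝ) * μ x⌋ : ℤ) : ℝ) := hford x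
      have h2 : ((⌊(n : ℝ) * μ x⌋ : ℤ) : ℝ) ≤ (n : ℝ) * μ x := Int.floor_le _
      have h3 : -((n : ℝ) * μ x) ≤ (C.ord x (v : F) : ℝ) := by linarith
      have h4 := mul_le_mul_of_nonneg_left h3 (inv_nonneg.2 hnpos.le)
      rw [mul_neg, inv_mul_cancel_left₀ hnpos.ne'] at h4
      show 0 ≤ μ x + (n : ℝ)⁻¹ * (C.ord x (v : F) : ℝ)
      linarith
    · -- Case (b): μ is principal; take E = -μ
      have hEp : C.IsPrincipalR (fun x => -(g.muInfX x).toReal) := by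
        have h := Submodule.neg_mem _ hprin
        have heq : (fun x => -(g.muInfX x).toReal)
            = -(fun x => (g.muInfX x).toReal) := by
          funext x; simp
        rw [heq]
        exact h
      refine core_converse C g hnb hEp fun x => ?_
      simp
end
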